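/- Let Γ = (e_i, e_p, e_j, e_q) be a cycle of length 4 of a finite connected simple graph G, and let H be the induced subgraph of G on the four vertices of Γ. Assume H is not a complete graph. Then for every nonzero polynomial F in the toric ideal I_H, there exist monomials M and N appearing (with nonzero coefficient) in F such that x_i x_j divides M and x_p x_q divides N. -/

import Mathlib

open MvPolynomial

noncomputable section

/-- The exponent of the variable `t j` in the image of `x i`: it is `1` if the vertex `j`
is an endpoint of the edge `e i`, and `0` otherwise (incidence vector of the edge `e i`). -/
def incid {n m : ℕ} (e : Fin m → Sym2 (Fin n)) (i : Fin m) (j : Fin n) : ℕ :=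
  if j ∈ e i then 1 else 0

/-- The `K`-algebra homomorphism `K[x_1,…,x_m] → K[t_1,…,t_n]` sending `x i` to
`t_j t_k`, where `e i = {v_j, v_k}`. -/
def toricMap (K : Type*) [CommRing K] {n m : ℕ} (e : Fin m → Sym2 (Fin n)) :
    MvPolynomial (Fin m) K →ₐ[K] MvPolynomial (Fin n) K :=
  aeval fun i => ∏ j, X j ^ incid e i j

/-- The toric ideal `I_G` of the graph with edges `e`. -/
def toricIdeal (K : Type*) [CommRing K] {n m : ℕ} (e : Fin m → Sym2 (Fin n)) :
    Ideal (MvPolynomial (Fin m) K) :=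
  RingHom.ker (toricMap K e)

/-- The toric map of the subgraph of `G` consisting of the edges `e l` with `P l`. -/
def subToricMap (K : Type*) [CommRing K] {n m : ℕ} (e : Fin m → Sym2 (Fin n))
    (P : Fin m → Prop) : MvPolynomial {l : Fin m // P l} K →ₐ[K] MvPolynomial (Fin n) K :=
  aeval fun l => ∏ j, X j ^ incid e l.1 j

/-- The toric ideal `I_H ⊆ K[x_l : e_l ∈ E(H)]` of the subgraph of `G` consisting of the
edges `e l` with `P l`. -/
def subToricIdeal (K : Type*) [CommRing K] {n m : ℕ} (e : Fin m → Sym2 (Fin n))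
    (P : Fin m → Prop) : Ideal (MvPolynomial {l : Fin m // P l} K) :=
  RingHom.ker (subToricMap K e P)


lemma prod_monomial_one {τ σ R : Type*} [CommSemiring R] [DecidableEq σ] (s : Finset σ)
    (g : σ → (τ →₀ ℕ)) :
    (∏ x ∈ s, (monomial (g x) (1 : R) : MvPolynomial τ R)) = monomial (∑ x ∈ s, g x) 1 := by
  induction s using Finset.induction with
  | empty => simp
  | insert x s hx ih =>
    rw [Finset.prod_insert hx, Finset.sum_insert hx, ih, monomial_mul, one_mul]

lemma aeval_monomial_map {R σ τ : Type*} [CommRing R] (w : σ → (τ →₀ ℕ)) (M : σ →₀ ℕ) (r : R) :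
    aeval (fun l => (monomial (w l) (1 : R) : MvPolynomial τ R)) (monomial M r) =
      monomial (M.sum fun l k => k • w l) r := by
  classical
  rw [aeval_monomial]
  have h1 : (M.prod fun l k => (monomial (w l) (1 : R) : MvPolynomial τ R) ^ k) =
      monomial (M.sum fun l k => k • w l) 1 := by
    rw [Finsupp.prod, Finsupp.sum]
    rw [show (∏ l ∈ M.support, (monomial (w l) (1:R) : MvPolynomial τ R) ^ M l) =
        ∏ l ∈ M.support, (monomial (M l • w l) (1:R) : MvPolynomial τ R) from
      Finset.prod_congr rfl fun l _ => by rw [monomial_pow, one_pow]]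
    exact prod_monomial_one _ _
  rw [h1, algebraMap_eq, C_mul_monomial, mul_one]

lemma exists_partner {R σ τ : Type*} [CommRing R] (w : σ → (τ →₀ ℕ))
    (F : MvPolynomial σ R)
    (h0 : aeval (fun l => (monomial (w l) (1 : R) : MvPolynomial τ R)) F = 0)
    {M₀ : σ →₀ ℕ} (hM₀ : M₀ ∈ F.support) :
    ∃ N ∈ F.support, N ≠ M₀ ∧
      N.sum (fun l k => k • w l) = M₀.sum (fun l k => k • w l) := by
  classical
  by_contra hcon
  push_neg at hcon
  set A := fun M : σ →₀ ℕ => M.sum fun l k => k • w l with hA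
  have hcoeff : (aeval (fun l => (monomial (w l) (1 : R) : MvPolynomial τ R)) F).coeff (A M₀)
      = F.coeff M₀ := by
    conv_lhs => rw [F.as_sum, map_sum]
    rw [coeff_sum]
    have : ∀ M ∈ F.support,
        coeff (A M₀) (aeval (fun l => (monomial (w l) (1 : R) : MvPolynomial τ R))
          (monomial M (F.coeff M))) = if M = M₀ then F.coeff M₀ else 0 := by
      intro M hM
      rw [aeval_monomial_map, coeff_monomial]
      by_cases h : A M = A M₀
      · have hMM : M = M₀ := by
          by_contra hne
          exact hcon M hM hne h
        simp [hMM, hA]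
      · rw [if_neg h, if_neg]
        intro hMM; exact h (by rw [hMM])
    rw [Finset.sum_congr rfl this, Finset.sum_ite_eq' _ M₀, if_pos hM₀]
  rw [h0, coeff_zero] at hcoeff
  exact (MvPolynomial.mem_support_iff.mp hM₀) hcoeff.symm

lemma sum_ite_eq_apply {σ : Type*} [DecidableEq σ] (M : σ →₀ ℕ) (a : σ) :
    (M.sum fun l k => if l = a then k else 0) = M a := by
  rw [Finsupp.sum, Finset.sum_ite_eq' M.support a (fun x => M x)]
  split_ifs with h
  · rfl
  · exact (Finsupp.notMem_support_iff.mp h).symm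

lemma sum_split3 {σ : Type*} (M : σ →₀ ℕ) (f g h : σ → ℕ → ℕ)
    (hf : ∀ l, f l 0 = 0) (hg : ∀ l, g l 0 = 0) (hh : ∀ l, h l 0 = 0) :
    (M.sum fun l k => f l k + g l k + h l k) = M.sum f + M.sum g + M.sum h := by
  simp only [Finsupp.sum, Finset.sum_add_distrib]

lemma single_add_le {σ : Type*} {x y : σ} (hxy : x ≠ y) (M : σ →₀ ℕ)
    (hx : 1 ≤ M x) (hy : 1 ≤ M y) :
    Finsupp.single x 1 + Finsupp.single y 1 ≤ M := by
  classical
  rw [Finsupp.le_def]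
  intro l
  rw [Finsupp.add_apply, Finsupp.single_apply, Finsupp.single_apply]
  split_ifs with hh1 hh2 hh2
  · exact absurd (hh1.trans hh2.symm) hxy
  · subst hh1; simpa using hx
  · subst hh2; simpa using hy
  · simp

lemma core {K : Type*} [Field K] {n m : ℕ} (e : Fin m → Sym2 (Fin n))
    (he : Function.Injective e)
    (u₁ u₂ u₃ u₄ : Fin n)
    (h12 : u₁ ≠ u₂) (h13 : u₁ ≠ u₃) (h14 : u₁ ≠ u₄)
    (h23 : u₂ ≠ u₃) (h24 : u₂ ≠ u₄) (h34 : u₃ ≠ u₄)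
    (a b c d : Fin m)
    (hea : e a = s(u₁, u₂)) (heb : e b = s(u₂, u₃))
    (hec : e c = s(u₃, u₄)) (hed : e d = s(u₄, u₁))
    (P : Fin m → Prop) (hPa : P a) (hPb : P b) (hPc : P c) (hPd : P d)
    (hclass : ∀ l : {l : Fin m // P l}, l = ⟨a, hPa⟩ ∨ l = ⟨b, hPb⟩ ∨ l = ⟨c, hPc⟩ ∨
      l = ⟨d, hPd⟩ ∨ e l.1 = s(u₁, u₃))
    (F : MvPolynomial {l : Fin m // P l} K) (hF : subToricMap K e P F = 0) (hF0 : F ≠ 0) :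
    (∃ M ∈ F.support, Finsupp.single (⟨a, hPa⟩ : {l : Fin m // P l}) 1 +
        Finsupp.single (⟨c, hPc⟩ : {l : Fin m // P l}) 1 ≤ M) ∧
    (∃ N ∈ F.support, Finsupp.single (⟨b, hPb⟩ : {l : Fin m // P l}) 1 +
        Finsupp.single (⟨d, hPd⟩ : {l : Fin m // P l}) 1 ≤ N) := by
  classical
  set a' : {l : Fin m // P l} := ⟨a, hPa⟩ with ha'
  set b' : {l : Fin m // P l} := ⟨b, hPb⟩ with hb'
  set c' : {l : Fin m // P l} := ⟨c, hPc⟩ with hc'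
  set d' : {l : Fin m // P l} := ⟨d, hPd⟩ with hd'
  have h21 := h12.symm; have h31 := h13.symm; have h41 := h14.symm
  have h32 := h23.symm; have h42 := h24.symm; have h43 := h34.symm
  -- Sym2 inequalities
  have nab : (s(u₁,u₂) : Sym2 (Fin n)) ≠ s(u₂,u₃) := by
    intro h
    rcases Sym2.eq_iff.mp h with ⟨h1, h2⟩ | ⟨h1, h2⟩
    · exact h12 h1
    · exact h13 h1
  have nac : (s(u₁,u₂) : Sym2 (Fin n)) ≠ s(u₃,u₄) := by
    intro h
    rcases Sym2.eq_iff.mp h with ⟨h1, h2⟩ | ⟨h1, h2⟩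
    · exact h13 h1
    · exact h14 h1
  have nad : (s(u₁,u₂) : Sym2 (Fin n)) ≠ s(u₄,u₁) := by
    intro h
    rcases Sym2.eq_iff.mp h with ⟨h1, h2⟩ | ⟨h1, h2⟩
    · exact h14 h1
    · exact h24 h2
  have nbc : (s(u₂,u₃) : Sym2 (Fin n)) ≠ s(u₃,u₄) := by
    intro h
    rcases Sym2.eq_iff.mp h with ⟨h1, h2⟩ | ⟨h1, h2⟩
    · exact h23 h1
    · exact h24 h1
  have nbd : (s(u₂,u₃) : Sym2 (Fin n)) ≠ s(u₄,u₁) := by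
    intro h
    rcases Sym2.eq_iff.mp h with ⟨h1, h2⟩ | ⟨h1, h2⟩
    · exact h24 h1
    · exact h12 h1.symm
  have ncd : (s(u₃,u₄) : Sym2 (Fin n)) ≠ s(u₄,u₁) := by
    intro h
    rcases Sym2.eq_iff.mp h with ⟨h1, h2⟩ | ⟨h1, h2⟩
    · exact h34 h1
    · exact h13 h1.symm
  have nach : (s(u₁,u₂) : Sym2 (Fin n)) ≠ s(u₁,u₃) := by
    intro h
    rcases Sym2.eq_iff.mp h with ⟨h1, h2⟩ | ⟨h1, h2⟩
    · exact h23 h2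
    · exact h13 h1
  have nbch : (s(u₂,u₃) : Sym2 (Fin n)) ≠ s(u₁,u₃) := by
    intro h
    rcases Sym2.eq_iff.mp h with ⟨h1, h2⟩ | ⟨h1, h2⟩
    · exact h12 h1.symm
    · exact h23 h1
  have ncch : (s(u₃,u₄) : Sym2 (Fin n)) ≠ s(u₁,u₃) := by
    intro h
    rcases Sym2.eq_iff.mp h with ⟨h1, h2⟩ | ⟨h1, h2⟩
    · exact h13 h1.symm
    · exact h14 h2.symm
  have ndch : (s(u₄,u₁) : Sym2 (Fin n)) ≠ s(u₁,u₃) := by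
    intro h
    rcases Sym2.eq_iff.mp h with ⟨h1, h2⟩ | ⟨h1, h2⟩
    · exact h14 h1.symm
    · exact h34 h1.symm
  -- subtype distinctness
  have sab : a' ≠ b' := by
    simp only [ha', hb', ne_eq, Subtype.mk.injEq]
    exact fun h => nab (by rw [← hea, ← heb, h])
  have sac : a' ≠ c' := by
    simp only [ha', hc', ne_eq, Subtype.mk.injEq]
    exact fun h => nac (by rw [← hea, ← hec, h])
  have sad : a' ≠ d' := by
    simp only [ha', hd', ne_eq, Subtype.mk.injEq]
    exact fun h => nad (by rw [← hea, ← hed, h])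
  have sbc : b' ≠ c' := by
    simp only [hb', hc', ne_eq, Subtype.mk.injEq]
    exact fun h => nbc (by rw [← heb, ← hec, h])
  have sbd : b' ≠ d' := by
    simp only [hb', hd', ne_eq, Subtype.mk.injEq]
    exact fun h => nbd (by rw [← heb, ← hed, h])
  have scd : c' ≠ d' := by
    simp only [hc', hd', ne_eq, Subtype.mk.injEq]
    exact fun h => ncd (by rw [← hec, ← hed, h])
  have each : e a'.1 ≠ s(u₁,u₃) := by rw [ha', hea]; exact nach
  have ebch : e b'.1 ≠ s(u₁,u₃) := by rw [hb', heb]; exact nbch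
  have ecch : e c'.1 ≠ s(u₁,u₃) := by rw [hc', hec]; exact ncch
  have edch : e d'.1 ≠ s(u₁,u₃) := by rw [hd', hed]; exact ndch
  -- the exponent vectors
  set w : {l : Fin m // P l} → (Fin n →₀ ℕ) :=
    fun l => Finsupp.equivFunOnFinite.symm (fun v => incid e l.1 v) with hw
  have hwapp : ∀ l v, w l v = incid e l.1 v := fun l v => rfl
  have hmap : (fun l : {l : Fin m // P l} =>
      (∏ v, X v ^ incid e l.1 v : MvPolynomial (Fin n) K)) =
      fun l => monomial (w l) 1 := by
    funext l
    have h1 : (∏ v, (X v : MvPolynomial (Fin n) K) ^ incid e l.1 v) = ∏ v, X v ^ (w l) v :=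
      Finset.prod_congr rfl fun v _ => by rw [hwapp]
    rw [h1, ← prod_X_pow_eq_monomial]
    exact (Finset.prod_subset (Finset.subset_univ _) fun v _ hv => by
      rw [Finsupp.notMem_support_iff.mp hv, pow_zero]).symm
  have hker : aeval (fun l => (monomial (w l) (1:K) : MvPolynomial (Fin n) K)) F = 0 := by
    rw [← hmap]; exact hF
  set A : ({l : Fin m // P l} →₀ ℕ) → (Fin n →₀ ℕ) :=
    fun M => M.sum fun l k => k • w l with hA
  set S : ({l : Fin m // P l} →₀ ℕ) → ℕ :=
    fun M => M.sum fun l k => if e l.1 = s(u₁,u₃) then k else 0 with hS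
  -- pointwise decomposition
  have hpt : ∀ (v : Fin n) (l : {l : Fin m // P l}) (k : ℕ),
      k * incid e l.1 v =
      incid e a v * (if l = a' then k else 0) + incid e b v * (if l = b' then k else 0) +
      incid e c v * (if l = c' then k else 0) + incid e d v * (if l = d' then k else 0) +
      (if v ∈ (s(u₁,u₃) : Sym2 (Fin n)) then 1 else 0) *
        (if e l.1 = s(u₁,u₃) then k else 0) := by
    intro v l k
    have ca : (a' : Fin m) = a := rfl
    have cb : (b' : Fin m) = b := rfl
    have cc : (c' : Fin m) = c := rfl
    have cd : (d' : Fin m) = d := rfl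
    rcases hclass l with rfl | rfl | rfl | rfl | hch
    · simp [ca, sab, sac, sad, each, (show e a ≠ s(u₁,u₃) from each), mul_comm]
    · simp [cb, sab.symm, sbc, sbd, ebch, (show e b ≠ s(u₁,u₃) from ebch), mul_comm]
    · simp [cc, sac.symm, sbc.symm, scd, ecch, (show e c ≠ s(u₁,u₃) from ecch), mul_comm]
    · simp [cd, sad.symm, sbd.symm, scd.symm, edch, (show e d ≠ s(u₁,u₃) from edch), mul_comm]
    · have la : l ≠ a' := fun h => each (h ▸ hch)
      have lb : l ≠ b' := fun h => ebch (h ▸ hch)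
      have lc : l ≠ c' := fun h => ecch (h ▸ hch)
      have ld : l ≠ d' := fun h => edch (h ▸ hch)
      simp [incid, hch, la, lb, lc, ld, mul_comm]
  -- summation formula
  have key : ∀ (M : {l : Fin m // P l} →₀ ℕ) (v : Fin n),
      A M v = incid e a v * M a' + incid e b v * M b' + incid e c v * M c' +
        incid e d v * M d' +
        (if v ∈ (s(u₁,u₃) : Sym2 (Fin n)) then 1 else 0) * S M := by
    intro M v
    have h0 : A M v = M.sum fun l k => k * incid e l.1 v := by
      rw [hA, Finsupp.sum_apply]
      exact Finsupp.sum_congr fun l _ => by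
        rw [Finsupp.smul_apply, hwapp, smul_eq_mul]
    have h1 : (M.sum fun l k => k * incid e l.1 v) =
        M.sum (fun l k =>
          incid e a v * (if l = a' then k else 0) + incid e b v * (if l = b' then k else 0) +
          incid e c v * (if l = c' then k else 0) + incid e d v * (if l = d' then k else 0) +
          (if v ∈ (s(u₁,u₃) : Sym2 (Fin n)) then 1 else 0) *
            (if e l.1 = s(u₁,u₃) then k else 0)) :=
      Finsupp.sum_congr fun l _ => hpt v l (M l)
    rw [h0, h1]
    simp only [Finsupp.sum, Finset.sum_add_distrib, ← Finset.mul_sum]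
    rw [show (∑ l ∈ M.support, if l = a' then M l else 0) = M a' from sum_ite_eq_apply M a',
      show (∑ l ∈ M.support, if l = b' then M l else 0) = M b' from sum_ite_eq_apply M b',
      show (∑ l ∈ M.support, if l = c' then M l else 0) = M c' from sum_ite_eq_apply M c',
      show (∑ l ∈ M.support, if l = d' then M l else 0) = M d' from sum_ite_eq_apply M d']
    rfl
  -- pick a monomial and its partner
  have hsupp : F.support.Nonempty :=
    Finset.nonempty_iff_ne_empty.mpr fun h => hF0 (MvPolynomial.support_eq_empty.mp h)
  obtain ⟨M₀, hM₀⟩ := hsupp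
  obtain ⟨N, hN, hne, hAN⟩ := exists_partner w F hker hM₀
  have E : ∀ v, A N v = A M₀ v := fun v => DFunLike.congr_fun hAN v
  have E1 := E u₁
  have E2 := E u₂
  have E3 := E u₃
  have E4 := E u₄
  rw [key, key] at E1 E2 E3 E4
  simp only [incid, hea, heb, hec, hed, Sym2.mem_iff, h12, h13, h14, h21, h23, h24, h31,
    h32, h34, h41, h42, h43, if_true, if_false, eq_self_iff_true, true_or, or_true,
    or_false, false_or, if_neg, if_pos, one_mul, zero_mul, mul_one, mul_zero, zero_add,
    add_zero] at E1 E2 E3 E4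
  have hSeq : ∀ (l : {l : Fin m // P l}), e l.1 = s(u₁,u₃) →
      ∀ M : {l : Fin m // P l} →₀ ℕ, S M = M l := by
    intro l hch M
    have h1 : (M.sum fun l' k => if e l'.1 = s(u₁,u₃) then k else 0) =
        M.sum fun l' k => if l' = l then k else 0 := by
      refine Finsupp.sum_congr fun l' _ => ?_
      by_cases h : l' = l
      · subst h; rw [if_pos hch, if_pos rfl]
      · rw [if_neg, if_neg h]
        intro hc
        exact h (Subtype.ext (he (hc.trans hch.symm)))
    show (M.sum fun l' k => if e l'.1 = s(u₁,u₃) then k else 0) = M l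
    rw [h1]
    exact sum_ite_eq_apply M l
  have tri : (N a' = M₀ a' ∧ N b' = M₀ b' ∧ N c' = M₀ c' ∧ N d' = M₀ d' ∧ S N = S M₀) ∨
      (M₀ a' + 1 ≤ N a' ∧ M₀ c' + 1 ≤ N c' ∧ N b' + 1 ≤ M₀ b' ∧ N d' + 1 ≤ M₀ d') ∨
      (N a' + 1 ≤ M₀ a' ∧ N c' + 1 ≤ M₀ c' ∧ M₀ b' + 1 ≤ N b' ∧ M₀ d' + 1 ≤ N d') := by
    omega
  rcases tri with ⟨q1, q2, q3, q4, q5⟩ | ⟨q1, q2, q3, q4⟩ | ⟨q1, q2, q3, q4⟩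
  · exfalso
    apply hne
    ext l
    rcases hclass l with rfl | rfl | rfl | rfl | hch
    · exact q1
    · exact q2
    · exact q3
    · exact q4
    · rw [← hSeq l hch N, ← hSeq l hch M₀, q5]
  · exact ⟨⟨N, hN, single_add_le sac N (by omega) (by omega)⟩,
      ⟨M₀, hM₀, single_add_le sbd M₀ (by omega) (by omega)⟩⟩
  · exact ⟨⟨M₀, hM₀, single_add_le sac M₀ (by omega) (by omega)⟩,
      ⟨N, hN, single_add_le sbd N (by omega) (by omega)⟩⟩

/-- Let `Γ = (e i, e p, e j, e q)` be a 4-cycle of `G` and let `H` be the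
induced subgraph of `G` on the four vertices of `Γ`.  If `H` is not a complete graph, then
every nonzero polynomial `F ∈ I_H` has a monomial divisible by `x i * x j` and a monomial
divisible by `x p * x q`. -/
theorem monomials_of_nonzero_poly_in_cycle_ideal {K : Type*} [Field K] [IsAlgClosed K]
    {n m : ℕ} (e : Fin m → Sym2 (Fin n))
    (he : Function.Injective e) (hl : ∀ i, ¬ (e i).IsDiag)
    (hconn : (SimpleGraph.fromEdgeSet (Set.range e)).Connected)
    (v₁ v₂ v₃ v₄ : Fin n) (hv : v₁ ≠ v₂ ∧ v₁ ≠ v₃ ∧ v₁ ≠ v₄ ∧ v₂ ≠ v₃ ∧ v₂ ≠ v₄ ∧ v₃ ≠ v₄)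
    (i p j q : Fin m)
    (hΓ : e i = s(v₁, v₂) ∧ e p = s(v₂, v₃) ∧ e j = s(v₃, v₄) ∧ e q = s(v₄, v₁))
    (W : Set (Fin n)) (hW : W = {v₁, v₂, v₃, v₄})
    (P : Fin m → Prop) (hP : ∀ l, P l ↔ ∀ v ∈ e l, v ∈ W)
    (hPi : P i) (hPp : P p) (hPj : P j) (hPq : P q)
    (hnotcomplete : ¬ ∀ x ∈ W, ∀ y ∈ W, x ≠ y → ∃ t : Fin m, e t = s(x, y))
    (F : MvPolynomial {l : Fin m // P l} K) (hF : F ∈ subToricIdeal K e P) (hF0 : F ≠ 0) :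
    (∃ M ∈ F.support, Finsupp.single (⟨i, hPi⟩ : {l : Fin m // P l}) 1 +
        Finsupp.single (⟨j, hPj⟩ : {l : Fin m // P l}) 1 ≤ M) ∧
    (∃ N ∈ F.support, Finsupp.single (⟨p, hPp⟩ : {l : Fin m // P l}) 1 +
        Finsupp.single (⟨q, hPq⟩ : {l : Fin m // P l}) 1 ≤ N) := by
  classical
  obtain ⟨hei, hep, hej, heq⟩ := hΓ
  obtain ⟨h12, h13, h14, h23, h24, h34⟩ := hv
  have hF' : subToricMap K e P F = 0 := by
    rwa [subToricIdeal, RingHom.mem_ker] at hF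
  -- classification of the edges of H
  have hclass : ∀ l : {l : Fin m // P l}, l = ⟨i, hPi⟩ ∨ l = ⟨p, hPp⟩ ∨ l = ⟨j, hPj⟩ ∨
      l = ⟨q, hPq⟩ ∨ e l.1 = s(v₁, v₃) ∨ e l.1 = s(v₂, v₄) := by
    rintro ⟨l, hPl⟩
    rw [hP] at hPl
    obtain ⟨x, y, hxy⟩ : ∃ x y, e l = s(x, y) := by
      induction e l using Sym2.ind with
      | _ x y => exact ⟨x, y, rfl⟩
    have hne : x ≠ y := by
      intro h
      exact hl l (by rw [hxy, h]; exact Sym2.mk_isDiag_iff.mpr rfl)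
    have hx : x ∈ W := hPl x (by rw [hxy]; exact Sym2.mem_mk_left x y)
    have hy : y ∈ W := hPl y (by rw [hxy]; exact Sym2.mem_mk_right x y)
    rw [hW] at hx hy
    simp only [Set.mem_insert_iff, Set.mem_singleton_iff] at hx hy
    rcases hx with rfl | rfl | rfl | rfl <;> rcases hy with rfl | rfl | rfl | rfl <;>
      first
      | exact absurd rfl hne
      | exact Or.inl (Subtype.ext (he (hxy.trans hei.symm)))
      | exact Or.inl (Subtype.ext (he ((hxy.trans Sym2.eq_swap).trans hei.symm)))
      | exact Or.inr (Or.inl (Subtype.ext (he (hxy.trans hep.symm))))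
      | exact Or.inr (Or.inl (Subtype.ext (he ((hxy.trans Sym2.eq_swap).trans hep.symm))))
      | exact Or.inr (Or.inr (Or.inl (Subtype.ext (he (hxy.trans hej.symm)))))
      | exact Or.inr (Or.inr (Or.inl (Subtype.ext (he ((hxy.trans Sym2.eq_swap).trans
          hej.symm)))))
      | exact Or.inr (Or.inr (Or.inr (Or.inl (Subtype.ext (he (hxy.trans heq.symm))))))
      | exact Or.inr (Or.inr (Or.inr (Or.inl (Subtype.ext (he ((hxy.trans
          Sym2.eq_swap).trans heq.symm))))))
      | exact Or.inr (Or.inr (Or.inr (Or.inr (Or.inl hxy))))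
      | exact Or.inr (Or.inr (Or.inr (Or.inr (Or.inl (hxy.trans Sym2.eq_swap)))))
      | exact Or.inr (Or.inr (Or.inr (Or.inr (Or.inr hxy))))
      | exact Or.inr (Or.inr (Or.inr (Or.inr (Or.inr (hxy.trans Sym2.eq_swap)))))
  -- one of the two diagonals is missing
  push_neg at hnotcomplete
  obtain ⟨x, hx, y, hy, hxy, hmiss⟩ := hnotcomplete
  rw [hW] at hx hy
  simp only [Set.mem_insert_iff, Set.mem_singleton_iff] at hx hy
  have hdiag : (∀ t : Fin m, e t ≠ s(v₁, v₃)) ∨ (∀ t : Fin m, e t ≠ s(v₂, v₄)) := by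
    rcases hx with rfl | rfl | rfl | rfl <;> rcases hy with rfl | rfl | rfl | rfl <;>
      first
      | exact absurd rfl hxy
      | exact absurd hei (hmiss i)
      | exact absurd (hei.trans Sym2.eq_swap) (hmiss i)
      | exact absurd hep (hmiss p)
      | exact absurd (hep.trans Sym2.eq_swap) (hmiss p)
      | exact absurd hej (hmiss j)
      | exact absurd (hej.trans Sym2.eq_swap) (hmiss j)
      | exact absurd heq (hmiss q)
      | exact absurd (heq.trans Sym2.eq_swap) (hmiss q)
      | exact Or.inl hmiss
      | exact Or.inl (fun t ht => hmiss t (ht.trans Sym2.eq_swap))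
      | exact Or.inr hmiss
      | exact Or.inr (fun t ht => hmiss t (ht.trans Sym2.eq_swap))
  rcases hdiag with hm13 | hm24
  · -- the diagonal s(v₁,v₃) is missing: use the rotated cycle (v₂,v₃,v₄,v₁)
    have hclass' : ∀ l : {l : Fin m // P l}, l = ⟨p, hPp⟩ ∨ l = ⟨j, hPj⟩ ∨ l = ⟨q, hPq⟩ ∨
        l = ⟨i, hPi⟩ ∨ e l.1 = s(v₂, v₄) := by
      intro l
      rcases hclass l with h | h | h | h | h | h
      · exact Or.inr (Or.inr (Or.inr (Or.inl h)))
      · exact Or.inl h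
      · exact Or.inr (Or.inl h)
      · exact Or.inr (Or.inr (Or.inl h))
      · exact absurd h (hm13 l.1)
      · exact Or.inr (Or.inr (Or.inr (Or.inr h)))
    obtain ⟨⟨M, hM, hMle⟩, ⟨N, hN, hNle⟩⟩ :=
      core e he v₂ v₃ v₄ v₁ h23 h24 h12.symm h34 h13.symm h14.symm p j q i
        hep hej heq hei P hPp hPj hPq hPi hclass' F hF' hF0
    exact ⟨⟨N, hN, by rwa [add_comm] at hNle⟩, ⟨M, hM, hMle⟩⟩
  · -- the diagonal s(v₂,v₄) is missing
    have hclass' : ∀ l : {l : Fin m // P l}, l = ⟨i, hPi⟩ ∨ l = ⟨p, hPp⟩ ∨ l = ⟨j, hPj⟩ ∨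
        l = ⟨q, hPq⟩ ∨ e l.1 = s(v₁, v₃) := by
      intro l
      rcases hclass l with h | h | h | h | h | h
      · exact Or.inl h
      · exact Or.inr (Or.inl h)
      · exact Or.inr (Or.inr (Or.inl h))
      · exact Or.inr (Or.inr (Or.inr (Or.inl h)))
      · exact Or.inr (Or.inr (Or.inr (Or.inr h)))
      · exact absurd h (hm24 l.1)
    exact core e he v₁ v₂ v₃ v₄ h12 h13 h14 h23 h24 h34 i p j q
      hei hep hej heq P hPi hPp hPj hPq hclass' F hF' hF0
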